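/- Any connected NP_2-digital H-space is NP_2-contractible. -/

import Mathlib

/-- A digital image: a finite set with a reflexive, symmetric adjacency relation
(a finite reflexive graph). -/
structure DigImage where
  carrier : Type
  [fintype : Fintype carrier]
  adj : carrier → carrier → Prop
  adj_refl : ∀ x, adj x x
  adj_symm : ∀ {x y}, adj x y → adj y x

attribute [instance] DigImage.fintype

/-- `f : (X,κ) → (Y,λ)` is digitally continuous if it preserves adjacency. -/
def DigContinuous (X Y : DigImage) (f : X.carrier → Y.carrier) : Prop :=
  ∀ ⦃a b : X.carrier⦄, X.adj a b → Y.adj (f a) (f b)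

/-- The product of two digital images with the normal product adjacency `NP_i`
(for `i ≤ 1` this is `NP_1`; otherwise `NP_2`): two pairs are adjacent iff
their coordinates are adjacent in at most `i` positions and equal elsewhere. -/
def DigImage.prod (i : ℕ) (X Y : DigImage) : DigImage where
  carrier := X.carrier × Y.carrier
  adj p q :=
    if i ≤ 1 then (p.1 = q.1 ∧ Y.adj p.2 q.2) ∨ (p.2 = q.2 ∧ X.adj p.1 q.1)
    else X.adj p.1 q.1 ∧ Y.adj p.2 q.2
  adj_refl p := by
    split_ifs
    · exact Or.inl ⟨rfl, Y.adj_refl p.2⟩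
    · exact ⟨X.adj_refl p.1, Y.adj_refl p.2⟩
  adj_symm {p q} h := by
    split_ifs at h ⊢ with hi
    · rcases h with ⟨h1, h2⟩ | ⟨h1, h2⟩
      · exact Or.inl ⟨h1.symm, Y.adj_symm h2⟩
      · exact Or.inr ⟨h1.symm, X.adj_symm h2⟩
    · exact ⟨X.adj_symm h.1, Y.adj_symm h.2⟩

/-- The triple product of digital images with the normal product adjacency `NP_i`:
coordinates adjacent in at most `i` positions and equal in all other positions. -/
def DigImage.prod3 (i : ℕ) (X Y Z : DigImage) : DigImage where
  carrier := X.carrier × Y.carrier × Z.carrier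
  adj p q :=
    if i ≤ 1 then
      (p.1 = q.1 ∧ p.2.1 = q.2.1 ∧ Z.adj p.2.2 q.2.2) ∨
      (p.1 = q.1 ∧ p.2.2 = q.2.2 ∧ Y.adj p.2.1 q.2.1) ∨
      (p.2.1 = q.2.1 ∧ p.2.2 = q.2.2 ∧ X.adj p.1 q.1)
    else
      (p.1 = q.1 ∧ Y.adj p.2.1 q.2.1 ∧ Z.adj p.2.2 q.2.2) ∨
      (p.2.1 = q.2.1 ∧ X.adj p.1 q.1 ∧ Z.adj p.2.2 q.2.2) ∨
      (p.2.2 = q.2.2 ∧ X.adj p.1 q.1 ∧ Y.adj p.2.1 q.2.1)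
  adj_refl p := by
    split_ifs
    · exact Or.inl ⟨rfl, rfl, Z.adj_refl p.2.2⟩
    · exact Or.inl ⟨rfl, Y.adj_refl p.2.1, Z.adj_refl p.2.2⟩
  adj_symm {p q} h := by
    split_ifs at h ⊢ with hi
    · rcases h with ⟨h1, h2, h3⟩ | ⟨h1, h2, h3⟩ | ⟨h1, h2, h3⟩
      · exact Or.inl ⟨h1.symm, h2.symm, Z.adj_symm h3⟩
      · exact Or.inr (Or.inl ⟨h1.symm, h2.symm, Y.adj_symm h3⟩)
      · exact Or.inr (Or.inr ⟨h1.symm, h2.symm, X.adj_symm h3⟩)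
    · rcases h with ⟨h1, h2, h3⟩ | ⟨h1, h2, h3⟩ | ⟨h1, h2, h3⟩
      · exact Or.inl ⟨h1.symm, Y.adj_symm h2, Z.adj_symm h3⟩
      · exact Or.inr (Or.inl ⟨h1.symm, X.adj_symm h2, Z.adj_symm h3⟩)
      · exact Or.inr (Or.inr ⟨h1.symm, X.adj_symm h2, Y.adj_symm h3⟩)

/-- The digital interval `[0,m]_ℤ` with the standard adjacency `|a−b| ≤ 1`. -/
def digInterval (m : ℕ) : DigImage where
  carrier := Fin (m + 1)
  adj a b := |(a : ℤ) - (b : ℤ)| ≤ 1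
  adj_refl a := by simp
  adj_symm {a b} h := by
    have h' : |(a : ℤ) - (b : ℤ)| ≤ 1 := h
    rw [abs_sub_comm] at h'
    exact h'

/-- `f` and `g` are `NP_i`-digitally homotopic: there is an
`NP_i`-continuous `H : X × [0,m]_ℤ → Y` with `H(·,0) = f` and `H(·,m) = g`. -/
def DigHomotopic (i : ℕ) (X Y : DigImage) (f g : X.carrier → Y.carrier) : Prop :=
  ∃ (m : ℕ) (H : X.carrier × Fin (m + 1) → Y.carrier),
    DigContinuous (DigImage.prod i X (digInterval m)) Y H ∧
    (∀ x, H (x, 0) = f x) ∧ (∀ x, H (x, Fin.last m) = g x)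

/-- An `NP_i`-digital H-space `(X,e,μ)`. -/
structure IsHSpace (i : ℕ) (X : DigImage) (e : X.carrier)
    (μ : X.carrier × X.carrier → X.carrier) : Prop where
  continuous : DigContinuous (DigImage.prod i X X) X μ
  right_unit : DigHomotopic i X X (fun x => μ (x, e)) id
  left_unit : DigHomotopic i X X (fun x => μ (e, x)) id

/-- H-equivalence of `NP_i`-digital H-spaces. -/
def HSpaceEquiv (i : ℕ) (X : DigImage) (eX : X.carrier)
    (μX : X.carrier × X.carrier → X.carrier)
    (Y : DigImage) (eY : Y.carrier)
    (μY : Y.carrier × Y.carrier → Y.carrier) : Prop :=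
  ∃ (f : X.carrier → Y.carrier) (g : Y.carrier → X.carrier),
    DigContinuous X Y f ∧ DigContinuous Y X g ∧ f eX = eY ∧ g eY = eX ∧
    DigHomotopic i Y Y (f ∘ g) id ∧ DigHomotopic i X X (g ∘ f) id ∧
    DigHomotopic i (DigImage.prod i X X) Y (fun p => f (μX p)) (fun p => μY (f p.1, f p.2)) ∧
    DigHomotopic i (DigImage.prod i Y Y) X (fun p => g (μY p)) (fun p => μX (g p.1, g p.2))

/-- `NP_i`-homotopy equivalence of digital images. -/
def DigHtpyEquiv (i : ℕ) (X Y : DigImage) : Prop :=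
  ∃ (f : X.carrier → Y.carrier) (g : Y.carrier → X.carrier),
    DigContinuous X Y f ∧ DigContinuous Y X g ∧
    DigHomotopic i X X (g ∘ f) id ∧ DigHomotopic i Y Y (f ∘ g) id

/-- A digital image is `NP_i`-irreducible if it is not `NP_i`-homotopy
equivalent to any digital image with fewer points. -/
def DigIrreducible (i : ℕ) (X : DigImage) : Prop :=
  ¬ ∃ Y : DigImage, Fintype.card Y.carrier < Fintype.card X.carrier ∧ DigHtpyEquiv i X Y

/-- A digital image is connected if any two points are joined by a path
of consecutively adjacent points. -/
def DigConnected (X : DigImage) : Prop :=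
  ∀ a b : X.carrier, Relation.ReflTransGen X.adj a b

/-- A digital image is `NP_i`-contractible if the identity is `NP_i`-homotopic
to a constant map. -/
def DigContractible (i : ℕ) (X : DigImage) : Prop :=
  ∃ c : X.carrier, DigHomotopic i X X id (fun _ => c)

/-- An isomorphism of digital images: a continuous bijection with continuous inverse. -/
def IsDigIso (X Y : DigImage) (f : X.carrier → Y.carrier) : Prop :=
  DigContinuous X Y f ∧ ∃ g : Y.carrier → X.carrier,
    DigContinuous Y X g ∧ Function.LeftInverse g f ∧ Function.RightInverse g f

/-- The sub-digital-image on the points satisfying `P`, with the induced adjacency. -/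
noncomputable def subImage (X : DigImage) (P : X.carrier → Prop) : DigImage where
  carrier := {x : X.carrier // P x}
  fintype := Fintype.ofFinite _
  adj a b := X.adj a.1 b.1
  adj_refl a := X.adj_refl a.1
  adj_symm h := X.adj_symm h

/-- The connected component of `e`, as a digital image. -/
noncomputable def componentImage (X : DigImage) (e : X.carrier) : DigImage :=
  subImage X (fun x => Relation.ReflTransGen X.adj e x)

/-- Homotopy-associativity of an `NP_i`-digital multiplication:
`μ∘(id × μ) ≃ᵢ μ∘(μ × id)` as maps `X × X × X → X` with `NP_i` adjacency. -/
def HomotopyAssociative (i : ℕ) (X : DigImage)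
    (μ : X.carrier × X.carrier → X.carrier) : Prop :=
  DigHomotopic i (DigImage.prod3 i X X X) X
    (fun p => μ (p.1, μ (p.2.1, p.2.2)))
    (fun p => μ (μ (p.1, p.2.1), p.2.2))

/-- `α` is a left homotopy-inverse for the H-space `(X,e,μ)`. -/
def LeftHtpyInverse (i : ℕ) (X : DigImage) (e : X.carrier)
    (μ : X.carrier × X.carrier → X.carrier) (α : X.carrier → X.carrier) : Prop :=
  DigContinuous X X α ∧ DigContinuous X X (fun x => μ (α x, x)) ∧
  DigHomotopic i X X (fun x => μ (α x, x)) (fun _ => e)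

/-- `β` is a right homotopy-inverse for the H-space `(X,e,μ)`. -/
def RightHtpyInverse (i : ℕ) (X : DigImage) (e : X.carrier)
    (μ : X.carrier × X.carrier → X.carrier) (β : X.carrier → X.carrier) : Prop :=
  DigContinuous X X β ∧ DigContinuous X X (fun x => μ (x, β x)) ∧
  DigHomotopic i X X (fun x => μ (x, β x)) (fun _ => e)

section NP2Aux

attribute [local instance] Classical.propDecidable

lemma prod2_adj (X Y : DigImage) (p q : X.carrier × Y.carrier) :
    (DigImage.prod 2 X Y).adj p q ↔ X.adj p.1 q.1 ∧ Y.adj p.2 q.2 := by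
  show (if (2:ℕ) ≤ 1 then (p.1 = q.1 ∧ Y.adj p.2 q.2) ∨ (p.2 = q.2 ∧ X.adj p.1 q.1)
        else X.adj p.1 q.1 ∧ Y.adj p.2 q.2) ↔ _
  rw [if_neg (by omega)]

/-- `f` and `g` are strongly close: cross-adjacency preservation. -/
def StrClose (X Y : DigImage) (f g : X.carrier → Y.carrier) : Prop :=
  ∀ a b, X.adj a b → Y.adj (f a) (g b)

/-- One step of a strong (NP₂) homotopy. -/
def Step (X Y : DigImage) (f g : X.carrier → Y.carrier) : Prop :=
  DigContinuous X Y f ∧ DigContinuous X Y g ∧ StrClose X Y f g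

abbrev Chain (X Y : DigImage) (f g : X.carrier → Y.carrier) : Prop :=
  Relation.ReflTransGen (Step X Y) f g

lemma step_symm {X Y : DigImage} {f g : X.carrier → Y.carrier}
    (h : Step X Y f g) : Step X Y g f :=
  ⟨h.2.1, h.1, fun a b hab => Y.adj_symm (h.2.2 b a (X.adj_symm hab))⟩

lemma chain_symm {X Y : DigImage} {f g : X.carrier → Y.carrier}
    (h : Chain X Y f g) : Chain X Y g f :=
  (@Relation.ReflTransGen.symmetric _ _ ⟨fun _ _ hs => step_symm hs⟩).symm _ _ h

lemma homotopic_refl {X Y : DigImage} (f : X.carrier → Y.carrier)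
    (hf : DigContinuous X Y f) : DigHomotopic 2 X Y f f := by
  refine ⟨0, fun p => f p.1, ?_, fun x => rfl, fun x => rfl⟩
  intro p q hpq
  replace hpq := (prod2_adj _ _ _ _).mp hpq
  exact hf hpq.1

lemma homotopic_tail {X Y : DigImage} {f g k : X.carrier → Y.carrier}
    (h : DigHomotopic 2 X Y f g) (hs : Step X Y g k) :
    DigHomotopic 2 X Y f k := by
  obtain ⟨m, H, hH, h0, hm⟩ := h
  refine ⟨m + 1, fun p => if hp : (p.2 : ℕ) < m + 1 then H (p.1, ⟨p.2, hp⟩) else k p.1,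
    ?_, ?_, ?_⟩
  · intro p q hpq
    replace hpq := (prod2_adj _ _ _ _).mp hpq
    obtain ⟨hx, ht⟩ := hpq
    have ht' : |((Fin.val p.2 : ℕ) : ℤ) - ((Fin.val q.2 : ℕ) : ℤ)| ≤ 1 := ht
    obtain ⟨hta, htb⟩ := abs_le.mp ht'
    have hp2 : Fin.val p.2 < m + 2 := (show Fin (m + 2) from p.2).isLt
    have hq2 : Fin.val q.2 < m + 2 := (show Fin (m + 2) from q.2).isLt
    dsimp only
    by_cases h1 : Fin.val p.2 < m + 1 <;> by_cases h2 : Fin.val q.2 < m + 1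
    · rw [dif_pos h1, dif_pos h2]
      apply hH
      refine (prod2_adj _ _ _ _).mpr ?_
      exact ⟨hx, ht'⟩
    · rw [dif_pos h1, dif_neg h2]
      have hpm : Fin.val p.2 = m := by omega
      have : (⟨Fin.val p.2, h1⟩ : Fin (m + 1)) = Fin.last m := by
        apply Fin.ext; simpa using hpm
      rw [this, hm]
      exact hs.2.2 _ _ hx
    · rw [dif_neg h1, dif_pos h2]
      have hqm : Fin.val q.2 = m := by omega
      have : (⟨Fin.val q.2, h2⟩ : Fin (m + 1)) = Fin.last m := by
        apply Fin.ext; simpa using hqm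
      rw [this, hm]
      exact Y.adj_symm (hs.2.2 _ _ (X.adj_symm hx))
    · rw [dif_neg h1, dif_neg h2]
      exact hs.2.1 hx
  · intro x
    dsimp only
    rw [dif_pos (by simp : Fin.val (0 : Fin (m + 2)) < m + 1)]
    have : (⟨Fin.val (0 : Fin (m + 2)), by simp⟩ : Fin (m + 1)) = 0 := by
      apply Fin.ext; simp
    rw [this]
    exact h0 x
  · intro x
    dsimp only
    rw [dif_neg (by simp : ¬ Fin.val (Fin.last (m + 1)) < m + 1)]

lemma homotopic_of_chain {X Y : DigImage} {f g : X.carrier → Y.carrier}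
    (h : Chain X Y f g) (hf : DigContinuous X Y f) :
    DigHomotopic 2 X Y f g := by
  induction h with
  | refl => exact homotopic_refl f hf
  | tail _ hs ih => exact homotopic_tail ih hs

lemma chain_of_homotopic {X Y : DigImage} {f g : X.carrier → Y.carrier}
    (h : DigHomotopic 2 X Y f g) : Chain X Y f g := by
  obtain ⟨m, H, hH, h0, hm⟩ := h
  have slice_cont : ∀ t : Fin (m + 1), DigContinuous X Y (fun x => H (x, t)) := by
    intro t a b hab
    apply hH
    refine (prod2_adj _ _ _ _).mpr ?_
    exact ⟨hab, by show |((t : ℕ) : ℤ) - ((t : ℕ) : ℤ)| ≤ 1; simp⟩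
  have key : ∀ t : ℕ, ∀ ht : t < m + 1, Chain X Y f (fun x => H (x, ⟨t, ht⟩)) := by
    intro t
    induction t with
    | zero =>
      intro ht
      have : (fun x => H (x, (⟨0, ht⟩ : Fin (m + 1)))) = f := by
        funext x
        have : (⟨0, ht⟩ : Fin (m + 1)) = 0 := by apply Fin.ext; simp
        rw [this]; exact h0 x
      rw [this]
    | succ t ih =>
      intro ht
      have ht' : t < m + 1 := by omega
      refine (ih ht').tail ⟨slice_cont _, slice_cont _, ?_⟩
      intro a b hab
      apply hH
      refine (prod2_adj _ _ _ _).mpr ?_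
      refine ⟨hab, ?_⟩
      show |((t : ℕ) : ℤ) - (((t + 1 : ℕ)) : ℤ)| ≤ 1
      rw [abs_le]; push_cast; omega
  have := key m (Nat.lt_succ_self m)
  have hlast : (fun x => H (x, (⟨m, Nat.lt_succ_self m⟩ : Fin (m + 1)))) = g := by
    funext x
    have : (⟨m, Nat.lt_succ_self m⟩ : Fin (m + 1)) = Fin.last m := rfl
    rw [this]; exact hm x
  rwa [hlast] at this

lemma chain_comp {X Y Z W : DigImage} {u v : X.carrier → Y.carrier}
    (h : Chain X Y u v) {p : W.carrier → X.carrier} {q : Y.carrier → Z.carrier}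
    (hp : DigContinuous W X p) (hq : DigContinuous Y Z q) :
    Chain W Z (fun w => q (u (p w))) (fun w => q (v (p w))) := by
  refine Relation.ReflTransGen.lift (fun u : X.carrier → Y.carrier => fun w => q (u (p w))) ?_ _ _ h
  rintro a b ⟨ha, hb, hc⟩
  refine ⟨?_, ?_, ?_⟩
  · intro x y hxy; exact hq (ha (hp hxy))
  · intro x y hxy; exact hq (hb (hp hxy))
  · intro x y hxy; exact hq (hc _ _ (hp hxy))

lemma eq_id_of_chain_id {X : DigImage}
    (hdom : ∀ x y : X.carrier, (∀ z, X.adj z x → X.adj z y) → x = y)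
    {f : X.carrier → X.carrier} (h : Chain X X f id) : f = id := by
  have h' : Chain X X id f := chain_symm h
  clear h
  induction h' with
  | refl => rfl
  | tail _ hs ih =>
    rename_i b c _
    rw [ih] at hs
    funext x
    exact (hdom x (c x) (fun z hz => hs.2.2 z x hz)).symm

end NP2Aux

section NP2Reduction

attribute [local instance] Classical.propDecidable

/-- The image with the dominated point `x₀` removed. -/
noncomputable def AImg (X : DigImage) (x₀ : X.carrier) : DigImage :=
  subImage X (fun x => x ≠ x₀)

/-- The retraction sending `x₀` to the dominating point `x₁`. -/
noncomputable def rmap (X : DigImage) (x₀ x₁ : X.carrier) (hne : x₀ ≠ x₁) :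
    X.carrier → (AImg X x₀).carrier := fun x =>
  if h : x = x₀ then ⟨x₁, Ne.symm hne⟩ else ⟨x, h⟩

lemma rmap_val (X : DigImage) (x₀ x₁ : X.carrier) (hne : x₀ ≠ x₁)
    (a : (AImg X x₀).carrier) : rmap X x₀ x₁ hne a.1 = a := by
  simp only [rmap]
  exact dif_neg a.2

lemma rmap_adj (X : DigImage) (x₀ x₁ : X.carrier) (hne : x₀ ≠ x₁)
    (hdom : ∀ z, X.adj z x₀ → X.adj z x₁) :
    ∀ {x y : X.carrier}, X.adj x y →
    X.adj (rmap X x₀ x₁ hne x).1 (rmap X x₀ x₁ hne y).1 := by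
  intro x y hxy
  simp only [rmap]
  by_cases hx : x = x₀ <;> by_cases hy : y = x₀
  · erw [dif_pos hx, dif_pos hy]; exact X.adj_refl x₁
  · erw [dif_pos hx, dif_neg hy]
    subst hx
    exact X.adj_symm (hdom y (X.adj_symm hxy))
  · erw [dif_neg hx, dif_pos hy]
    subst hy
    exact hdom x hxy
  · erw [dif_neg hx, dif_neg hy]; exact hxy

lemma rmap_cont (X : DigImage) (x₀ x₁ : X.carrier) (hne : x₀ ≠ x₁)
    (hdom : ∀ z, X.adj z x₀ → X.adj z x₁) :
    DigContinuous X (AImg X x₀) (rmap X x₀ x₁ hne) := by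
  intro x y hxy
  exact rmap_adj X x₀ x₁ hne hdom hxy

lemma incl_cont (X : DigImage) (x₀ : X.carrier) :
    DigContinuous (AImg X x₀) X Subtype.val := fun _ _ h => h

lemma close_id_ir (X : DigImage) (x₀ x₁ : X.carrier) (hne : x₀ ≠ x₁)
    (hdom : ∀ z, X.adj z x₀ → X.adj z x₁) :
    StrClose X X id (fun x => (rmap X x₀ x₁ hne x).1) := by
  intro a b hab
  simp only [rmap]
  by_cases hb : b = x₀
  · erw [dif_pos hb]
    subst hb
    exact hdom a hab
  · erw [dif_neg hb]; exact hab

lemma rmap_x_adj (X : DigImage) (x₀ x₁ : X.carrier) (hne : x₀ ≠ x₁)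
    (hdom : ∀ z, X.adj z x₀ → X.adj z x₁) :
    ∀ {x y : X.carrier}, X.adj x y → X.adj (rmap X x₀ x₁ hne x).1 y := by
  intro x y hxy
  simp only [rmap]
  by_cases hx : x = x₀
  · erw [dif_pos hx]
    subst hx
    exact X.adj_symm (hdom y (X.adj_symm hxy))
  · erw [dif_neg hx]; exact hxy

end NP2Reduction

section NP2Main

attribute [local instance] Classical.propDecidable

lemma np2_main : ∀ (n : ℕ) (X : DigImage) (e : X.carrier)
    (μ : X.carrier × X.carrier → X.carrier),
    Fintype.card X.carrier ≤ n → IsHSpace 2 X e μ → DigConnected X →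
    DigContractible 2 X := by
  intro n
  induction n with
  | zero =>
    intro X e μ hc _ _
    have := Fintype.card_pos_iff.mpr ⟨e⟩
    omega
  | succ n ih =>
    intro X e μ hcard hH hconn
    by_cases hexists : ∃ x₀ x₁ : X.carrier, x₀ ≠ x₁ ∧ ∀ z, X.adj z x₀ → X.adj z x₁
    · -- reduction case: retract away the dominated point x₀
      obtain ⟨x₀, x₁, hne, hdom⟩ := hexists
      set A := AImg X x₀ with hA
      set r := rmap X x₀ x₁ hne with hr
      have hrc : DigContinuous X A r := rmap_cont X x₀ x₁ hne hdom
      have hic : DigContinuous A X Subtype.val := incl_cont X x₀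
      have hmuc := hH.continuous
      -- the H-space structure on A
      set eA : A.carrier := r e with heA
      set μA : A.carrier × A.carrier → A.carrier := fun p => r (μ (p.1.1, p.2.1)) with hμA
      have hμAc : DigContinuous (DigImage.prod 2 A A) A μA := by
        intro p q hpq
        replace hpq := (prod2_adj _ _ _ _).mp hpq
        apply hrc
        apply hmuc
        rw [prod2_adj]
        exact ⟨hpq.1, hpq.2⟩
      have hre_adj_e : X.adj (r e).1 e := by
        have : X.adj e e := X.adj_refl e
        exact rmap_x_adj X x₀ x₁ hne hdom this
      -- generic: for either unit side, build the chain on A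
      have unit_chain : ∀ (f : X.carrier → X.carrier),
          (∀ x y z w, X.adj x y → X.adj z w → X.adj (μ (x, z)) (μ (y, w))) → True := fun _ _ => trivial
      have hμadj : ∀ {x y z w : X.carrier}, X.adj x y → X.adj z w →
          X.adj (μ (x, z)) (μ (y, w)) := by
        intro x y z w h1 h2
        apply hmuc
        rw [prod2_adj]
        exact ⟨h1, h2⟩
      have right_unit_A : DigHomotopic 2 A A (fun a => μA (a, eA)) id := by
        have c1 : Chain A A (fun a => r (μ (a.1, (r e).1))) (fun a => r (μ (a.1, e))) := by
          refine Relation.ReflTransGen.single ⟨?_, ?_, ?_⟩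
          · intro a b hab
            exact hrc (hμadj hab (X.adj_refl (r e).1))
          · intro a b hab
            exact hrc (hμadj hab (X.adj_refl e))
          · intro a b hab
            exact hrc (hμadj hab hre_adj_e)
        have c2 : Chain X X (fun x => μ (x, e)) id := chain_of_homotopic hH.right_unit
        have c3 : Chain A A (fun a => r (μ (a.1, e))) (fun a => r (id a.1)) :=
          chain_comp c2 hic hrc
        have c4 : (fun a : A.carrier => r (id a.1)) = id := by
          funext a
          exact rmap_val X x₀ x₁ hne a
        rw [c4] at c3
        refine homotopic_of_chain (c1.trans c3) ?_
        intro a b hab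
        exact hrc (hμadj hab (X.adj_refl (r e).1))
      have left_unit_A : DigHomotopic 2 A A (fun a => μA (eA, a)) id := by
        have c1 : Chain A A (fun a => r (μ ((r e).1, a.1))) (fun a => r (μ (e, a.1))) := by
          refine Relation.ReflTransGen.single ⟨?_, ?_, ?_⟩
          · intro a b hab
            exact hrc (hμadj (X.adj_refl (r e).1) hab)
          · intro a b hab
            exact hrc (hμadj (X.adj_refl e) hab)
          · intro a b hab
            exact hrc (hμadj hre_adj_e hab)
        have c2 : Chain X X (fun x => μ (e, x)) id := chain_of_homotopic hH.left_unit
        have c3 : Chain A A (fun a => r (μ (e, a.1))) (fun a => r (id a.1)) :=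
          chain_comp c2 hic hrc
        have c4 : (fun a : A.carrier => r (id a.1)) = id := by
          funext a
          exact rmap_val X x₀ x₁ hne a
        rw [c4] at c3
        refine homotopic_of_chain (c1.trans c3) ?_
        intro a b hab
        exact hrc (hμadj (X.adj_refl (r e).1) hab)
      have hHA : IsHSpace 2 A eA μA := ⟨hμAc, right_unit_A, left_unit_A⟩
      have hconnA : DigConnected A := by
        intro a b
        have := hconn a.1 b.1
        have hlift : Relation.ReflTransGen A.adj (r a.1) (r b.1) :=
          Relation.ReflTransGen.lift r (by intro u v huv; exact hrc huv) _ _ this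
        have e1 : r a.1 = a := rmap_val X x₀ x₁ hne a
        have e2 : r b.1 = b := rmap_val X x₀ x₁ hne b
        rwa [e1, e2] at hlift
      have hcardA : Fintype.card A.carrier ≤ n := by
        have hlt : Fintype.card A.carrier < Fintype.card X.carrier := by
          refine @Fintype.card_lt_of_injective_of_notMem _ _ A.fintype X.fintype
            Subtype.val Subtype.val_injective x₀ ?_
          rintro ⟨a, ha⟩
          exact a.2 ha
        omega
      obtain ⟨c, hc⟩ := ih A eA μA hcardA hHA hconnA
      -- transfer contractibility back to X
      have cc : Chain A A id (fun _ => c) := chain_of_homotopic hc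
      have cc' : Chain X X (fun x => (id (r x)).1) (fun x => ((fun _ : A.carrier => c) (r x)).1) :=
        chain_comp cc hrc hic
      have step0 : Chain X X id (fun x => (r x).1) := by
        refine Relation.ReflTransGen.single ⟨fun a b hab => hab, ?_, ?_⟩
        · intro a b hab
          exact rmap_adj X x₀ x₁ hne hdom hab
        · exact close_id_ir X x₀ x₁ hne hdom
      refine ⟨c.1, homotopic_of_chain (step0.trans cc') (fun a b hab => hab)⟩
    · -- rigid case: no point is dominated
      push_neg at hexists
      have hdom : ∀ x y : X.carrier, (∀ z, X.adj z x → X.adj z y) → x = y := by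
        intro x y hz
        by_contra hne
        obtain ⟨z, hz1, hz2⟩ := hexists x y hne
        exact hz2 (hz z hz1)
      have hμadj : ∀ {x y z w : X.carrier}, X.adj x y → X.adj z w →
          X.adj (μ (x, z)) (μ (y, w)) := by
        intro x y z w h1 h2
        apply hH.continuous
        rw [prod2_adj]
        exact ⟨h1, h2⟩
      have hr : (fun x => μ (x, e)) = id :=
        eq_id_of_chain_id hdom (chain_of_homotopic hH.right_unit)
      have hl : (fun x => μ (e, x)) = id :=
        eq_id_of_chain_id hdom (chain_of_homotopic hH.left_unit)
      have hnbr : ∀ y, X.adj e y → y = e := by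
        intro y hy
        have key : ∀ x : X.carrier, x = μ (x, y) := by
          intro x
          apply hdom
          intro z hz
          have : X.adj (μ (z, e)) (μ (x, y)) := hμadj hz hy
          rwa [show μ (z, e) = z from congrFun hr z] at this
        have h1 : e = μ (e, y) := key e
        have h2 : μ (e, y) = y := congrFun hl y
        rw [h2] at h1
        exact h1.symm
      have hall : ∀ x : X.carrier, x = e := by
        intro x
        have hpath := hconn e x
        induction hpath with
        | refl => rfl
        | tail _ hbc ih2 =>
          rename_i b c _
          rw [ih2] at hbc
          exact hnbr c hbc
      refine ⟨e, ?_⟩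
      have : (id : X.carrier → X.carrier) = fun _ => e := by
        funext x
        exact hall x
      rw [this]
      exact homotopic_refl _ (fun a b _ => X.adj_refl e)

end NP2Main

/-- Any connected `NP_2`-digital H-space is `NP_2`-contractible. -/
theorem np2_connected_hspace_contractible (X : DigImage) (e : X.carrier)
    (μ : X.carrier × X.carrier → X.carrier) (h : IsHSpace 2 X e μ)
    (hconn : DigConnected X) :
    DigContractible 2 X :=
  np2_main (Fintype.card X.carrier) X e μ le_rfl h hconn
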